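/- Let M_n, ..., M_1 be kG-modules and for 1 ≤ i ≤ n-1 let φ_i : (M_n⊗⋯⊗M_{i+1})^G ⊗ (M_i⊗⋯⊗M_1)^G → (M_n⊗⋯⊗M_1)^G be the canonical multiplication maps. Then the map ψ, summing over all partitions p = (n_l,...,n_1) of n the tensor products of chosen spaces of irreducible invariants of the corresponding substrings, is surjective onto (M_n⊗⋯⊗M_1)^G. That is, every invariant in the tensor product is a sum of tensors of irreducible invariants of substrings. -/

import Mathlib

/-!
STATEMENT 1: Every invariant of a tensor product `M_n ⊗ ⋯ ⊗ M_1` of `kG`-modules is a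
sum of tensors of irreducible invariants of consecutive substrings: for any choice of
irreducible invariant subspaces (complements of the composite invariants), the map
`ψ = ⊕_p ψ_p`, summing over all partitions `p` of `n` the multiplication maps on the
chosen irreducible invariant subspaces, is surjective onto `(M_n ⊗ ⋯ ⊗ M_1)^G`.
-/

open scoped TensorProduct DirectSum Classical

section Strings

variable {k G : Type} [Field k] [Group G]
variable (M : ℕ → Type) [∀ i, AddCommGroup (M i)] [∀ i, Module k (M i)]

/-- The string `M_{i+m-1} ⊗ ⋯ ⊗ M_{i+1} ⊗ M_i` (tensor product of `m` consecutive
modules starting at `M_i`). -/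
noncomputable def Str : ℕ → ℕ → ModuleCat k
  | _, 0 => ModuleCat.of k k
  | i, (m + 1) => ModuleCat.of k (↥(Str (i + 1) m) ⊗[k] M i)

/-- Transport along an equality of starting indices. -/
noncomputable def strCast {i j : ℕ} (h : i = j) (m : ℕ) :
    ↥(Str (k := k) M i m) ≃ₗ[k] ↥(Str (k := k) M j m) :=
  h ▸ LinearEquiv.refl k ↥(Str (k := k) M i m)

/-- Transport along an equality of lengths. -/
noncomputable def strCastLen {i m m' : ℕ} (h : m = m') :
    ↥(Str (k := k) M i m) ≃ₗ[k] ↥(Str (k := k) M i m') :=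
  h ▸ LinearEquiv.refl k ↥(Str (k := k) M i m)

/-- The canonical multiplication map
`(M_{i+b+a-1} ⊗ ⋯ ⊗ M_{i+b}) ⊗ (M_{i+b-1} ⊗ ⋯ ⊗ M_i) → M_{i+a+b-1} ⊗ ⋯ ⊗ M_i`. -/
noncomputable def strMul : ∀ (a b i : ℕ),
    ↥(Str (k := k) M (i + b) a) →ₗ[k] ↥(Str (k := k) M i b) →ₗ[k] ↥(Str (k := k) M i (a + b))
  | a, 0, i => (LinearMap.lsmul k ↥(Str (k := k) M i a)).flip
  | a, b + 1, i =>
      (LinearMap.rTensorHom (M i)).comp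
        ((strMul a b (i + 1)).comp
          (strCast (k := k) M (by omega : i + b + 1 = (i + 1) + b) a).toLinearMap)

variable (ρ : ∀ i, Representation k G (M i))

/-- The diagonal action of `g : G` on a string. -/
noncomputable def strAct : ∀ (i m : ℕ) (_ : G), ↥(Str (k := k) M i m) →ₗ[k] ↥(Str (k := k) M i m)
  | _, 0, _ => LinearMap.id
  | i, m + 1, g => TensorProduct.map (strAct (i + 1) m g) (ρ i g)

/-- The invariants `(M_{i+m-1} ⊗ ⋯ ⊗ M_i)^G`. -/
noncomputable def strInv (i m : ℕ) : Submodule k ↥(Str (k := k) M i m) :=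
  ⨅ g : G, LinearMap.eqLocus (strAct M ρ i m g) LinearMap.id

/-- The space of composite invariants: the span of products of invariants of the two
substrings of a proper two-fold partition. -/
noncomputable def strComp (i m : ℕ) : Submodule k ↥(Str (k := k) M i m) :=
  Submodule.span k {x | ∃ a b : ℕ, ∃ h : a + b = m, 0 < a ∧ 0 < b ∧
    ∃ u ∈ strInv M ρ (i + b) a, ∃ w ∈ strInv M ρ i b,
      x = strCastLen M h (strMul M a b i u w)}

/-- Given a choice `Irr` of irreducible invariant subspaces, the tensor product of
the irreducible invariant spaces along a partition `l = [n_1, n_2, …]` (parts read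
from the bottom). -/
noncomputable def TIrr (Irr : ∀ i m : ℕ, Submodule k ↥(Str (k := k) M i m)) :
    ℕ → List ℕ → ModuleCat k
  | _, [] => ModuleCat.of k k
  | i, (a :: l) => ModuleCat.of k (↥(TIrr Irr (i + a) l) ⊗[k] ↥(Irr i a))

/-- The multiplication map from the tensor product of irreducible invariant spaces
along a partition into the full string. -/
noncomputable def iotaT (Irr : ∀ i m : ℕ, Submodule k ↥(Str (k := k) M i m)) :
    ∀ (i : ℕ) (l : List ℕ), ↥(TIrr (k := k) M Irr i l) →ₗ[k] ↥(Str (k := k) M i l.sum)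
  | _, [] => LinearMap.id
  | i, (a :: l) =>
      TensorProduct.lift
        ((((strMul (k := k) M l.sum a i).comp (iotaT Irr (i + a) l)).compl₂
            (Irr i a).subtype).compr₂
          (strCastLen (k := k) M (by omega : l.sum + a = a + l.sum)).toLinearMap)

/-- Partitions of `n` into positive parts. -/
def Pt (n : ℕ) : Type := {l : List ℕ // l.sum = n ∧ ∀ a ∈ l, 0 < a}

/-- The map `ψ = ⊕_p ψ_p` from the direct sum over all partitions of `n` of the
tensor products of irreducible invariant subspaces into the string of length `n`. -/
noncomputable def psiMap (Irr : ∀ i m : ℕ, Submodule k ↥(Str (k := k) M i m)) (n : ℕ) :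
    (⨁ p : Pt n, ↥(TIrr (k := k) M Irr 0 p.1)) →ₗ[k] ↥(Str (k := k) M 0 n) :=
  DirectSum.toModule k _ _ fun p =>
    (strCastLen (k := k) M p.2.1).toLinearMap.comp (iotaT (k := k) M Irr 0 p.1)

end Strings


section AuxLemmas

variable {k G : Type} [Field k] [Group G]
variable (M : ℕ → Type) [∀ i, AddCommGroup (M i)] [∀ i, Module k (M i)]
variable (ρ : ∀ i, Representation k G (M i))

theorem strMul_zero (a i : ℕ) (u : ↥(Str (k := k) M (i + 0) a)) (w : ↥(Str (k := k) M i 0)) :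
    strMul M a 0 i u w = (show k from w) • u := rfl

theorem strMul_succ (a b i : ℕ) (u : ↥(Str (k := k) M (i + (b+1)) a))
    (x : ↥(Str (k := k) M (i+1) b)) (v : M i) :
    strMul M a (b+1) i u (x ⊗ₜ v)
      = strMul M a b (i+1) (strCast M (by omega : i + b + 1 = (i+1)+b) a u) x ⊗ₜ v := rfl

theorem strAct_zero (i : ℕ) (g : G) (x : ↥(Str (k := k) M i 0)) :
    strAct M ρ i 0 g x = x := rfl

theorem strAct_succ (i m : ℕ) (g : G) (x : ↥(Str (k := k) M (i+1) m)) (v : M i) :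
    strAct M ρ i (m+1) g (x ⊗ₜ v) = strAct M ρ (i+1) m g x ⊗ₜ ρ i g v := rfl

theorem strCast_strCast {i j j' : ℕ} (h : i = j) (h' : j = j') (m : ℕ)
    (x : ↥(Str (k := k) M i m)) :
    strCast M h' m (strCast M h m x) = strCast M (h.trans h') m x := by
  subst h; subst h'; rfl

theorem strCastLen_strCastLen {i m m' m'' : ℕ} (h : m = m') (h' : m' = m'')
    (x : ↥(Str (k := k) M i m)) :
    strCastLen M h' (strCastLen M h x) = strCastLen M (h.trans h') x := by
  subst h; subst h'; rfl

theorem strCast_strCastLen {i j m m' : ℕ} (h : i = j) (h' : m = m')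
    (x : ↥(Str (k := k) M i m)) :
    strCast M h m' (strCastLen M h' x) = strCastLen M h' (strCast M h m x) := by
  subst h; subst h'; rfl

theorem strCastLen_succ {i m m' : ℕ} (h : m + 1 = m' + 1)
    (x : ↥(Str (k := k) M (i+1) m)) (v : M i) :
    strCastLen M h (x ⊗ₜ v) = strCastLen M (Nat.succ_injective h) x ⊗ₜ v := by
  have h' : m = m' := Nat.succ_injective h
  subst h'; rfl


theorem strAct_strCast {i j : ℕ} (h : i = j) (m : ℕ) (g : G) (x : ↥(Str (k := k) M i m)) :
    strAct M ρ j m g (strCast M h m x) = strCast M h m (strAct M ρ i m g x) := by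
  subst h; rfl

theorem strAct_strCastLen {i m m' : ℕ} (h : m = m') (g : G) (x : ↥(Str (k := k) M i m)) :
    strAct M ρ i m' g (strCastLen M h x) = strCastLen M h (strAct M ρ i m g x) := by
  subst h; rfl

theorem strCast_strMul {i j : ℕ} (h : i = j) (a b : ℕ)
    (u : ↥(Str (k := k) M (i + b) a)) (w : ↥(Str (k := k) M i b)) :
    strCast M h (a + b) (strMul M a b i u w)
      = strMul M a b j (strCast M (by omega : i + b = j + b) a u) (strCast M h b w) := by
  subst h; rfl

theorem strMul_castLen_left {i a a' b : ℕ} (h : a = a')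
    (u : ↥(Str (k := k) M (i + b) a)) (w : ↥(Str (k := k) M i b)) :
    strMul M a' b i (strCastLen M h u) w
      = strCastLen M (by omega : a + b = a' + b) (strMul M a b i u w) := by
  subst h; rfl

theorem strMul_castLen_right {i a b b' : ℕ} (h : b = b')
    (u : ↥(Str (k := k) M (i + b') a)) (w : ↥(Str (k := k) M i b)) :
    strMul M a b' i u (strCastLen M h w)
      = strCastLen M (by omega : a + b = a + b')
          (strMul M a b i (strCast M (by omega : i + b' = i + b) a u) w) := by
  subst h; rfl

theorem mem_strInv {i m : ℕ} (x : ↥(Str (k := k) M i m)) :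
    x ∈ strInv M ρ i m ↔ ∀ g : G, strAct M ρ i m g x = x := by
  simp [strInv, Submodule.mem_iInf, LinearMap.mem_eqLocus]

theorem strAct_strMul : ∀ (b a i : ℕ) (g : G) (u : ↥(Str (k := k) M (i + b) a))
    (w : ↥(Str (k := k) M i b)),
    strAct M ρ i (a + b) g (strMul M a b i u w)
      = strMul M a b i (strAct M ρ (i + b) a g u) (strAct M ρ i b g w)
  | 0, a, i, g, u, w => by
      rw [strMul_zero, strMul_zero, strAct_zero]
      exact map_smul (strAct M ρ i a g) (show k from w) u
  | b + 1, a, i, g, u, w => by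
      induction w using TensorProduct.induction_on with
      | zero => erw [map_zero]
      | add x y hx hy => erw [map_add, map_add, map_add, hx, hy, map_add]
      | tmul x v =>
        have h : i + b + 1 = (i+1) + b := by omega
        have e1 : strAct M ρ i (a + (b+1)) g (strMul M a (b+1) i u (x ⊗ₜ v))
            = strAct M ρ (i+1) (a+b) g (strMul M a b (i+1) (strCast M h a u) x)
                ⊗ₜ[k] (ρ i g v) := rfl
        have e2 : strMul M a (b+1) i (strAct M ρ (i+(b+1)) a g u)
              (strAct M ρ i (b+1) g (x ⊗ₜ v))
            = strMul M a b (i+1) (strCast M h a (strAct M ρ (i+b+1) a g u))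
                (strAct M ρ (i+1) b g x) ⊗ₜ[k] (ρ i g v) := rfl
        rw [e1, e2, strAct_strMul b a (i+1) g, strAct_strCast]


theorem strMul_assoc : ∀ (c a b i : ℕ) (u : ↥(Str (k := k) M (i + c + b) a))
    (v : ↥(Str (k := k) M (i + c) b)) (w : ↥(Str (k := k) M i c)),
    strMul M (a+b) c i (strMul M a b (i+c) u v) w
      = strCastLen M (by omega : a+(b+c) = a+b+c)
          (strMul M a (b+c) i (strCast M (by omega : i+c+b = i+(b+c)) a u)
            (strMul M b c i v w))
  | 0, a, b, i, u, v, w => ((strMul M a b i u).map_smul (show k from w) v).symm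
  | c+1, a, b, i, u, v, w => by
      induction w using TensorProduct.induction_on with
      | zero => erw [map_zero, map_zero]
      | add x y hx hy => erw [map_add, map_add, map_add, map_add, hx, hy]
      | tmul x v' =>
        have h : i + c + 1 = (i+1) + c := by omega
        have e1 : strMul M (a+b) (c+1) i (strMul M a b (i+(c+1)) u v) (x ⊗ₜ v')
            = strMul M (a+b) c (i+1) (strCast M h (a+b) (strMul M a b (i+c+1) u v)) x
                ⊗ₜ[k] v' := rfl
        have e2 : strCastLen M (by omega : a+(b+(c+1)) = a+b+(c+1))
              (strMul M a (b+(c+1)) i (strCast M (by omega : i+(c+1)+b = i+(b+(c+1))) a u)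
                (strMul M b (c+1) i v (x ⊗ₜ v')))
            = strCastLen M (by omega : a+(b+c) = a+b+c)
                (strMul M a (b+c) (i+1)
                  (strCast M (by omega : i+(b+c)+1 = (i+1)+(b+c)) a
                    (strCast M (by omega : i+(c+1)+b = i+(b+(c+1))) a u))
                  (strMul M b c (i+1) (strCast M h b v) x)) ⊗ₜ[k] v' :=
          strCastLen_succ M _ _ v'
        rw [e1, e2]
        refine congrArg (· ⊗ₜ[k] v') ?_
        rw [strCast_strMul M h, strMul_assoc c a b (i+1), strCast_strCast]
        exact (congrArg
          (fun z => strCastLen M (by omega : a+(b+c) = a+b+c)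
            (strMul M a (b+c) (i+1) z (strMul M b c (i+1) (strCast M h b v) x)))
          (strCast_strCast M (by omega : i+(c+1)+b = i+(b+(c+1)))
            (by omega : i+(b+(c+1)) = (i+1)+(b+c)) a u)).symm


theorem strCast_zero {i j : ℕ} (h : i = j) (x : ↥(Str (k := k) M i 0)) :
    strCast M h 0 x = x := by subst h; rfl

theorem strMul_one : ∀ (b i : ℕ) (w : ↥(Str (k := k) M i b)),
    strMul M 0 b i (show ↥(Str (k := k) M (i+b) 0) from (1:k)) w
      = strCastLen M (by omega : b = 0 + b) w
  | 0, i, w => mul_one (show k from w)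
  | b+1, i, w => by
      induction w using TensorProduct.induction_on with
      | zero => erw [map_zero, map_zero]
      | add x y hx hy => erw [map_add, map_add, hx, hy]
      | tmul x v =>
        have e1 : strMul M 0 (b+1) i (show ↥(Str (k := k) M (i+(b+1)) 0) from (1:k)) (x ⊗ₜ v)
            = strMul M 0 b (i+1) (show ↥(Str (k := k) M ((i+1)+b) 0) from (1:k)) x
                ⊗ₜ[k] v := by
          rw [strMul_succ, strCast_zero]
        rw [e1, strMul_one b (i+1) x]
        exact (strCastLen_succ M (by omega : b+1 = 0+(b+1)) x v).symm

theorem strCastLen_mem_strInv {i m m' : ℕ} (h : m = m') {x : ↥(Str (k := k) M i m)}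
    (hx : x ∈ strInv M ρ i m) : strCastLen M h x ∈ strInv M ρ i m' := by
  rw [mem_strInv] at hx ⊢
  intro g; rw [strAct_strCastLen, hx g]

theorem strCast_mem_strInv {i j m : ℕ} (h : i = j) {x : ↥(Str (k := k) M i m)}
    (hx : x ∈ strInv M ρ i m) : strCast M h m x ∈ strInv M ρ j m := by
  subst h; exact hx

theorem strMul_mem_strInv {a b i : ℕ} {u : ↥(Str (k := k) M (i+b) a)}
    {w : ↥(Str (k := k) M i b)} (hu : u ∈ strInv M ρ (i+b) a) (hw : w ∈ strInv M ρ i b) :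
    strMul M a b i u w ∈ strInv M ρ i (a+b) := by
  rw [mem_strInv] at hu hw ⊢
  intro g; rw [strAct_strMul, hu g, hw g]

theorem iotaT_tmul (Irr : ∀ i m : ℕ, Submodule k ↥(Str (k := k) M i m)) (i a : ℕ)
    (l : List ℕ) (y : ↥(TIrr M Irr (i+a) l)) (v : ↥(Irr i a)) :
    iotaT M Irr i (a :: l) (y ⊗ₜ v)
      = strCastLen M (by omega : l.sum + a = a + l.sum)
          (strMul M l.sum a i (iotaT M Irr (i+a) l y) v.1) := rfl

theorem iotaT_mem_strInv (Irr : ∀ i m : ℕ, Submodule k ↥(Str (k := k) M i m))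
    (hsub : ∀ i a, 0 < a → Irr i a ≤ strInv M ρ i a) :
    ∀ (l : List ℕ) (i : ℕ), (∀ a ∈ l, 0 < a) →
      ∀ y : ↥(TIrr M Irr i l), iotaT M Irr i l y ∈ strInv M ρ i l.sum
  | [], i, _, y => by rw [mem_strInv]; intro g; rfl
  | a :: l, i, hpos, y => by
      induction y using TensorProduct.induction_on with
      | zero => erw [map_zero]; exact Submodule.zero_mem _
      | add x y hx hy => erw [map_add]; exact Submodule.add_mem _ hx hy
      | tmul y v =>
        rw [iotaT_tmul]
        exact strCastLen_mem_strInv M ρ _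
          (strMul_mem_strInv M ρ
            (iotaT_mem_strInv Irr hsub l (i+a) (fun c hc => hpos c (List.mem_cons_of_mem a hc)) y)
            (hsub i a (hpos a (List.mem_cons_self)) v.2))


theorem range_strCast {i j : ℕ} (h : i = j) (Irr : ∀ i m : ℕ, Submodule k ↥(Str (k := k) M i m))
    (l : List ℕ) (x : ↥(Str (k := k) M i l.sum))
    (hx : x ∈ LinearMap.range (iotaT M Irr i l)) :
    strCast M h l.sum x ∈ LinearMap.range (iotaT M Irr j l) := by
  subst h; exact hx

theorem mul_range (Irr : ∀ i m : ℕ, Submodule k ↥(Str (k := k) M i m)) :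
    ∀ (p q : List ℕ) (i : ℕ)
    (w : ↥(Str (k := k) M i p.sum)) (_ : w ∈ LinearMap.range (iotaT M Irr i p))
    (u : ↥(Str (k := k) M (i + p.sum) q.sum))
    (_ : u ∈ LinearMap.range (iotaT M Irr (i + p.sum) q)),
    strMul M q.sum p.sum i u w
      ∈ (LinearMap.range (iotaT M Irr i (p ++ q))).map
          (strCastLen M (by rw [List.sum_append]; omega :
            (p++q).sum = q.sum + p.sum)).toLinearMap
  | [], q, i, w, hw, u, hu =>
      Submodule.mem_map_of_mem (Submodule.smul_mem _ (show k from w) hu)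
  | a :: p', q, i, w, hw, u, hu => by
      obtain ⟨z, rfl⟩ := hw
      induction z using TensorProduct.induction_on with
      | zero => erw [map_zero]; exact Submodule.zero_mem _
      | add x y hx hy => erw [map_add, map_add]; exact Submodule.add_mem _ hx hy
      | tmul y v =>
        have h₁ : p'.sum + a = a + p'.sum := by omega
        have hC : i + (a :: p').sum = (i+a) + p'.sum := by simp [List.sum_cons]; omega
        have hu' : strCast M hC q.sum u ∈ LinearMap.range (iotaT M Irr ((i+a)+p'.sum) q) :=
          range_strCast M hC Irr q u hu
        have IH := mul_range Irr p' q (i+a) (iotaT M Irr (i+a) p' y) ⟨y, rfl⟩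
          (strCast M hC q.sum u) hu'
        rcases Submodule.mem_map.mp IH with ⟨Z, hZ, hZeq⟩
        rcases hZ with ⟨z', rfl⟩
        refine Submodule.mem_map.mpr ⟨iotaT M Irr i ((a :: p') ++ q) (z' ⊗ₜ v),
          ⟨z' ⊗ₜ v, rfl⟩, ?_⟩
        refine Eq.symm ?_
        calc (show ↥(Str (k := k) M i (q.sum + (a + p'.sum))) from
              strMul M q.sum ((a :: p').sum) i u (iotaT M Irr i (a :: p') (y ⊗ₜ v)))
            = strCastLen M (by omega : q.sum + (p'.sum + a) = q.sum + (a + p'.sum))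
                (strMul M q.sum (p'.sum + a) i
                  (strCast M (by omega : i + (a + p'.sum) = i + (p'.sum + a)) q.sum u)
                  (strMul M p'.sum a i (iotaT M Irr (i+a) p' y) v.1)) :=
              strMul_castLen_right M h₁ u _
          _ = strCastLen M (by omega : q.sum + (p'.sum + a) = q.sum + (a + p'.sum))
                (strMul M q.sum (p'.sum + a) i
                  (strCast M (by omega : i + a + p'.sum = i + (p'.sum + a)) q.sum
                    (strCast M hC q.sum u))
                  (strMul M p'.sum a i (iotaT M Irr (i+a) p' y) v.1)) := by
              exact congrArg _ (congrArg
                (fun z => strMul M q.sum (p'.sum + a) i z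
                  (strMul M p'.sum a i (iotaT M Irr (i+a) p' y) v.1))
                (strCast_strCast M hC (by omega) q.sum u).symm)
          _ = strCastLen M (by omega : q.sum + (p'.sum + a) = q.sum + (a + p'.sum))
                (strCastLen M (by omega : q.sum + p'.sum + a = q.sum + (p'.sum + a))
                  (strMul M (q.sum + p'.sum) a i
                    (strMul M q.sum p'.sum (i+a) (strCast M hC q.sum u)
                      (iotaT M Irr (i+a) p' y)) v.1)) := by
              rw [strMul_assoc M a q.sum p'.sum i]
              simp only [strCastLen_strCastLen]
          _ = strCastLen M (by omega : q.sum + (p'.sum + a) = q.sum + (a + p'.sum))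
                (strCastLen M (by omega : q.sum + p'.sum + a = q.sum + (p'.sum + a))
                  (strMul M (q.sum + p'.sum) a i
                    (strCastLen M (by rw [List.sum_append]; omega :
                        (p'++q).sum = q.sum + p'.sum)
                      (iotaT M Irr (i+a) (p' ++ q) z')) v.1)) := by
              have hZeq' : strCastLen M (by rw [List.sum_append]; omega :
                    (p'++q).sum = q.sum + p'.sum)
                  (iotaT M Irr (i+a) (p' ++ q) z')
                  = strMul M q.sum p'.sum (i+a) (strCast M hC q.sum u)
                      (iotaT M Irr (i+a) p' y) := hZeq
              rw [← hZeq']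
          _ = strCastLen M (by omega : q.sum + (p'.sum + a) = q.sum + (a + p'.sum))
                (strCastLen M (by omega : q.sum + p'.sum + a = q.sum + (p'.sum + a))
                  (strCastLen M (by rw [List.sum_append]; omega :
                      (p'++q).sum + a = q.sum + p'.sum + a)
                    (strMul M (p'++q).sum a i (iotaT M Irr (i+a) (p' ++ q) z') v.1))) := by
              rw [strMul_castLen_left]
          _ = strCastLen M (by omega : q.sum + (p'.sum + a) = q.sum + (a + p'.sum))
                (strCastLen M (by omega : q.sum + p'.sum + a = q.sum + (p'.sum + a))
                  (strCastLen M (by rw [List.sum_append]; omega :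
                      (p'++q).sum + a = q.sum + p'.sum + a)
                    (strCastLen M (by omega : a + (p'++q).sum = (p'++q).sum + a)
                      (iotaT M Irr i (a :: (p' ++ q)) (z' ⊗ₜ v))))) := by
              rw [iotaT_tmul]
              simp only [strCastLen_strCastLen]
          _ = (show ↥(Str (k := k) M i (q.sum + (a + p'.sum))) from strCastLen M (by rw [List.sum_append]; omega :
                  ((a :: p') ++ q).sum = q.sum + (a :: p').sum)
                (iotaT M Irr i ((a :: p') ++ q) (z' ⊗ₜ v))) := by
              simp only [strCastLen_strCastLen]; exact (strCastLen_strCastLen M _ _ _).trans rfl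

end AuxLemmas

/-- Surjectivity of `ψ`: its range is exactly the space of invariants. -/
theorem psi_surjective_onto_invariants
    {k G : Type} [Field k] [Group G] [Finite G]
    (M : ℕ → Type) [∀ i, AddCommGroup (M i)] [∀ i, Module k (M i)]
    (ρ : ∀ i, Representation k G (M i))
    (Irr : ∀ i m : ℕ, Submodule k ↥(Str (k := k) M i m))
    (hIrr : ∀ i m : ℕ, 0 < m →
      strComp M ρ i m ⊓ Irr i m = ⊥ ∧ strComp M ρ i m ⊔ Irr i m = strInv M ρ i m)
    (n : ℕ) :
    LinearMap.range (psiMap (k := k) M Irr n) = strInv M ρ 0 n := by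
  classical
  have hsub : ∀ i a, 0 < a → Irr i a ≤ strInv M ρ i a := fun i a ha => by
    rw [← (hIrr i a ha).2]; exact le_sup_right
  have hle : LinearMap.range (psiMap (k := k) M Irr n) ≤ strInv M ρ 0 n := by
    rintro x ⟨y, rfl⟩
    induction y using DirectSum.induction_on with
    | zero => rw [map_zero]; exact Submodule.zero_mem _
    | of p z =>
        have e : psiMap (k := k) M Irr n (DirectSum.of _ p z)
            = strCastLen M p.2.1 (iotaT M Irr 0 p.1 z) :=
          DirectSum.toModule_lof (R := k) (ι := Pt n)
            (M := fun p : Pt n => ↥(TIrr (k := k) M Irr 0 p.1))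
            (N := ↥(Str (k := k) M 0 n))
            (φ := fun p : Pt n =>
              (strCastLen (k := k) M p.2.1).toLinearMap.comp (iotaT (k := k) M Irr 0 p.1))
            p z
        rw [e]
        exact strCastLen_mem_strInv M ρ _ (iotaT_mem_strInv M ρ Irr hsub p.1 0 p.2.2 z)
    | add x y hx hy => rw [map_add]; exact Submodule.add_mem _ hx hy
  have key : ∀ n i, strInv M ρ i n ≤ ⨆ p : Pt n,
      (LinearMap.range (iotaT M Irr i p.1)).map
        (strCastLen (k := k) M p.2.1).toLinearMap := by
    intro n
    induction n using Nat.strong_induction_on with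
    | _ n IH =>
      cases n with
      | zero =>
        intro i x _
        exact Submodule.mem_iSup_of_mem ⟨[], rfl, by simp⟩
          (Submodule.mem_map_of_mem ⟨x, rfl⟩)
      | succ m =>
        intro i x hx
        rw [← (hIrr i (m+1) (Nat.succ_pos m)).2] at hx
        rcases Submodule.mem_sup.mp hx with ⟨c, hc, y, hy, rfl⟩
        refine Submodule.add_mem _ ?_ ?_
        · -- composite part
          clear hx
          induction hc using Submodule.span_induction with
          | mem x hxmem =>
            rcases hxmem with ⟨a, b, hab, ha, hb, u, hu, w, hw, rfl⟩
            have hu' := IH a (by omega) (i+b) hu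
            have hw' := IH b (by omega) i hw
            refine Submodule.iSup_induction _
              (motive := fun u' => strCastLen M hab (strMul M a b i u' w) ∈ ⨆ p : Pt (m+1),
                (LinearMap.range (iotaT M Irr i p.1)).map
                  (strCastLen (k := k) M p.2.1).toLinearMap)
              hu' (fun q u' hu'' => ?_) ?_ ?_
            · rcases Submodule.mem_map.mp hu'' with ⟨U, hUm, rfl⟩
              rcases hUm with ⟨zq, rfl⟩
              refine Submodule.iSup_induction _
                (motive := fun w' => strCastLen M hab (strMul M a b i
                    ((strCastLen (k := k) M q.2.1).toLinearMap
                      (iotaT M Irr (i+b) q.1 zq)) w') ∈ ⨆ p : Pt (m+1),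
                  (LinearMap.range (iotaT M Irr i p.1)).map
                    (strCastLen (k := k) M p.2.1).toLinearMap)
                hw' (fun p w' hw'' => ?_) ?_ ?_
              · rcases Submodule.mem_map.mp hw'' with ⟨W, hWm, rfl⟩
                rcases hWm with ⟨zp, rfl⟩
                have hix : i + b = i + p.1.sum := by rw [p.2.1]
                have hm2 := mul_range M Irr p.1 q.1 i (iotaT M Irr i p.1 zp) ⟨zp, rfl⟩
                  (strCast M hix q.1.sum (iotaT M Irr (i+b) q.1 zq))
                  (range_strCast M hix Irr q.1 _ ⟨zq, rfl⟩)
                rcases Submodule.mem_map.mp hm2 with ⟨Z, hZm, hZe⟩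
                rcases hZm with ⟨zz, rfl⟩
                have hZe' : strCastLen M (by rw [List.sum_append]; omega :
                      (p.1 ++ q.1).sum = q.1.sum + p.1.sum)
                    (iotaT M Irr i (p.1 ++ q.1) zz)
                    = strMul M q.1.sum p.1.sum i
                        (strCast M hix q.1.sum (iotaT M Irr (i+b) q.1 zq))
                        (iotaT M Irr i p.1 zp) := hZe
                have hsumP : (p.1 ++ q.1).sum = m+1 := by
                  rw [List.sum_append, p.2.1, q.2.1]; omega
                have hposP : ∀ c ∈ p.1 ++ q.1, 0 < c := fun c hc =>
                  (List.mem_append.mp hc).elim (p.2.2 c) (q.2.2 c)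
                refine Submodule.mem_iSup_of_mem ⟨p.1 ++ q.1, hsumP, hposP⟩
                  (Submodule.mem_map.mpr ⟨iotaT M Irr i (p.1 ++ q.1) zz, ⟨zz, rfl⟩, ?_⟩)
                refine Eq.symm ?_
                calc strCastLen M hab (strMul M a b i
                        (strCastLen M q.2.1 (iotaT M Irr (i+b) q.1 zq))
                        (strCastLen M p.2.1 (iotaT M Irr i p.1 zp)))
                    = strCastLen M hab (strCastLen M (by rw [p.2.1] : a + p.1.sum = a + b)
                        (strMul M a p.1.sum i
                          (strCast M (by rw [p.2.1] : i + b = i + p.1.sum) a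
                            (strCastLen M q.2.1 (iotaT M Irr (i+b) q.1 zq)))
                          (iotaT M Irr i p.1 zp))) :=
                      congrArg _ (strMul_castLen_right M p.2.1 _ _)
                  _ = strCastLen M hab (strCastLen M (by rw [p.2.1] : a + p.1.sum = a + b)
                        (strMul M a p.1.sum i
                          (strCastLen M q.2.1
                            (strCast M (by rw [p.2.1] : i + b = i + p.1.sum) q.1.sum
                              (iotaT M Irr (i+b) q.1 zq)))
                          (iotaT M Irr i p.1 zp))) := by
                      rw [strCast_strCastLen]
                  _ = strCastLen M hab (strCastLen M (by rw [p.2.1] : a + p.1.sum = a + b)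
                        (strCastLen M (by rw [q.2.1] :
                            q.1.sum + p.1.sum = a + p.1.sum)
                          (strMul M q.1.sum p.1.sum i
                            (strCast M (by rw [p.2.1] : i + b = i + p.1.sum) q.1.sum
                              (iotaT M Irr (i+b) q.1 zq))
                            (iotaT M Irr i p.1 zp)))) := by
                      rw [strMul_castLen_left]
                  _ = strCastLen M hab (strCastLen M (by rw [p.2.1] : a + p.1.sum = a + b)
                        (strCastLen M (by rw [q.2.1] :
                            q.1.sum + p.1.sum = a + p.1.sum)
                          (strCastLen M (by rw [List.sum_append]; omega :
                              (p.1 ++ q.1).sum = q.1.sum + p.1.sum)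
                            (iotaT M Irr i (p.1 ++ q.1) zz)))) := by
                      rw [← hZe']
                  _ = strCastLen M hsumP (iotaT M Irr i (p.1 ++ q.1) zz) := by
                      simp only [strCastLen_strCastLen]
              · simp only [map_zero]
                exact Submodule.zero_mem _
              · intro x y hx hy
                simp only [map_add]
                exact Submodule.add_mem _ hx hy
            · simp only [map_zero, LinearMap.zero_apply]
              exact Submodule.zero_mem _
            · intro x y hx hy
              simp only [map_add, LinearMap.add_apply]
              exact Submodule.add_mem _ hx hy
          | zero => exact Submodule.zero_mem _
          | add x y hxm hym ihx ihy => exact Submodule.add_mem _ ihx ihy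
          | smul c x hxm ih => exact Submodule.smul_mem _ c ih
        · -- irreducible part
          refine Submodule.mem_iSup_of_mem ⟨[m+1], by simp, by simp⟩
            (Submodule.mem_map.mpr ⟨iotaT M Irr i [m+1]
              ((show ↥(TIrr M Irr (i+(m+1)) []) from (1:k)) ⊗ₜ
                (⟨y, hy⟩ : ↥(Irr i (m+1)))), ⟨_, rfl⟩, ?_⟩)
          have e1 : strMul M ([] : List ℕ).sum (m+1) i
              (iotaT M Irr (i+(m+1)) []
                (show ↥(TIrr M Irr (i+(m+1)) []) from (1:k)))
              ((⟨y, hy⟩ : ↥(Irr i (m+1))) : ↥(Str (k := k) M i (m+1)))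
              = strCastLen M (by omega : m+1 = 0 + (m+1)) y :=
            strMul_one M (m+1) i y
          calc strCastLen M (show ([m+1] : List ℕ).sum = m+1 by simp)
                (iotaT M Irr i [m+1]
                  ((show ↥(TIrr M Irr (i+(m+1)) []) from (1:k)) ⊗ₜ
                    (⟨y, hy⟩ : ↥(Irr i (m+1)))))
              = strCastLen M (by omega : (m+1) + 0 = m+1)
                  (strCastLen M (by omega : 0 + (m+1) = (m+1) + 0)
                    (strCastLen M (by omega : m+1 = 0 + (m+1)) y)) := by
                rw [iotaT_tmul, e1]; rfl
            _ = y := by simp only [strCastLen_strCastLen]; rfl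
  refine le_antisymm hle ?_
  intro x hx
  refine Submodule.iSup_induction _
    (motive := fun z => z ∈ LinearMap.range (psiMap (k := k) M Irr n))
    (key n 0 hx) (fun p z hz => ?_) ?_ ?_
  · rcases Submodule.mem_map.mp hz with ⟨W, hWm, rfl⟩
    rcases hWm with ⟨zz, rfl⟩
    exact ⟨DirectSum.lof k (Pt n) _ p zz,
      DirectSum.toModule_lof (R := k) (ι := Pt n)
        (M := fun p : Pt n => ↥(TIrr (k := k) M Irr 0 p.1))
        (N := ↥(Str (k := k) M 0 n))
        (φ := fun p : Pt n =>
          (strCastLen (k := k) M p.2.1).toLinearMap.comp (iotaT (k := k) M Irr 0 p.1))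
        p zz⟩
  · exact Submodule.zero_mem _
  · intro x y hx hy; exact Submodule.add_mem _ hx hy
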